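/- arXiv:1002.3569 — 3 statements merged into one kernel-verified Lean document; each statement's English description precedes it below -/
import Mathlib

section
/- Let G₁ and G₂ be profinite groups and let K be an open subgroup of G₁ × G₂. Then there exist an open subgroup U₁ of G₁ and a subgroup K₂ of G₂ such that K ∩ (U₁ × G₂) = U₁ × K₂; that is, for u ∈ U₁ and g ∈ G₂ the pair (u, g) lies in K if and only if g ∈ K₂. -/
/-- Lemma 2.2 of the paper. If `K` is an open subgroup of a product
of two profinite groups `G₁ × G₂`, then there is an open subgroup `U₁ ≤ G₁` and a
subgroup `K₂ ≤ G₂` such that `K ∩ (U₁ × G₂) = U₁ × K₂`. -/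
theorem stmt1 (G₁ G₂ : Type) [Group G₁] [Group G₂]
    [TopologicalSpace G₁] [IsTopologicalGroup G₁] [CompactSpace G₁] [T2Space G₁]
    [TotallyDisconnectedSpace G₁]
    [TopologicalSpace G₂] [IsTopologicalGroup G₂] [CompactSpace G₂] [T2Space G₂]
    [TotallyDisconnectedSpace G₂]
    (K : Subgroup (G₁ × G₂)) (hK : IsOpen (K : Set (G₁ × G₂))) :
    ∃ U₁ : Subgroup G₁, IsOpen (U₁ : Set G₁) ∧
      ∃ K₂ : Subgroup G₂, K ⊓ U₁.prod (⊤ : Subgroup G₂) = U₁.prod K₂ := by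
  -- K is clopen (open subgroups are closed)
  have hclopen : IsClopen (K : Set (G₁ × G₂)) :=
    ⟨Subgroup.isClosed_of_isOpen K hK, hK⟩
  obtain ⟨H, hH⟩ := IsTopologicalGroup.exist_openNormalSubgroup_sub_clopen_nhds_of_one
    hclopen K.one_mem
  -- U₁ := preimage of H under x ↦ (x, 1)
  refine ⟨H.toSubgroup.comap (MonoidHom.inl G₁ G₂), ?_, ?_⟩
  · exact H.isOpen.preimage (continuous_id.prodMk continuous_const)
  · refine ⟨K.comap (MonoidHom.inr G₁ G₂), ?_⟩
    ext ⟨x, y⟩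
    simp only [MonoidHom.inl_apply, MonoidHom.inr_apply, Subgroup.mem_inf, Subgroup.mem_prod, Subgroup.mem_top, and_true,
      Subgroup.mem_comap]
    constructor
    · rintro ⟨hxyK, hx1⟩
      refine ⟨hx1, ?_⟩
      have hx : (x, (1 : G₂)) ∈ K := hH hx1
      have := K.mul_mem hxyK (K.inv_mem hx)
      simpa using this
    · rintro ⟨hx1, hy⟩
      refine ⟨?_, hx1⟩
      have hx : (x, (1 : G₂)) ∈ K := hH hx1
      have := K.mul_mem hx hy
      simpa using this
end

section
/- Let F be a field and let C⁰, C¹, C² be finite-dimensional F-vector spaces, with nondegenerate symmetric bilinear forms ⟨·,·⟩ given on C⁰ and on C¹. Let d₀ : C⁰ → C¹ and d₁ : C¹ → C² be linear maps with d₁ ∘ d₀ = 0, and let ∂₁ : C¹ → C⁰ be the adjoint of d₀, i.e. ⟨d₀ x, y⟩ = ⟨x, ∂₁ y⟩ for all x ∈ C⁰, y ∈ C¹. Define H¹ = ker d₁ / im d₀ (first cohomology), Ω¹ = ker d₁ ∩ ker ∂₁ (closed and coclosed 1-chains), and Δ⁰ = ker(∂₁ ∘ d₀ : C⁰ → C⁰)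 (harmonic 0-chains). Then |dim_F H¹ − dim_F Ω¹| ≤ dim_F Δ⁰. -/
/-- Lemma 2.5 of the paper, the combinatorial `Hodge isomorphism'.
Given a complex `C⁰ → C¹ → C²` of finite-dimensional vector spaces, with nondegenerate
symmetric bilinear forms on `C⁰` and `C¹` and `∂₁` the adjoint of `d₀`, the dimensions
of `H¹ = ker d₁ / im d₀` and of `Ω¹ = ker d₁ ∩ ker ∂₁` differ by at most
`dim Δ⁰ = dim ker (∂₁ ∘ d₀)`. -/
theorem stmt3 (F : Type) [Field F]
    (C0 C1 C2 : Type) [AddCommGroup C0] [AddCommGroup C1] [AddCommGroup C2]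
    [Module F C0] [Module F C1] [Module F C2]
    [FiniteDimensional F C0] [FiniteDimensional F C1] [FiniteDimensional F C2]
    (B0 : LinearMap.BilinForm F C0) (B1 : LinearMap.BilinForm F C1)
    (hB0nd : B0.Nondegenerate) (hB1nd : B1.Nondegenerate)
    (hB0symm : B0.IsSymm) (hB1symm : B1.IsSymm)
    (d0 : C0 →ₗ[F] C1) (d1 : C1 →ₗ[F] C2) (del1 : C1 →ₗ[F] C0)
    (hcomplex : d1 ∘ₗ d0 = 0)
    (hadj : ∀ (x : C0) (y : C1), B1 (d0 x) y = B0 x (del1 y)) :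
    |(Module.finrank F
        (LinearMap.ker d1 ⧸ (LinearMap.range d0).comap (LinearMap.ker d1).subtype) : ℤ) -
      (Module.finrank F (LinearMap.ker d1 ⊓ LinearMap.ker del1 : Submodule F C1) : ℤ)| ≤
    (Module.finrank F (LinearMap.ker (del1 ∘ₗ d0)) : ℤ) := by
  classical
  set K := LinearMap.ker d1 with hK
  set R := LinearMap.range d0 with hR
  have hrefl1 : B1.IsRefl := hB1symm.isRefl
  have hRK : R ≤ K := by
    rintro _ ⟨x, rfl⟩
    simp only [LinearMap.mem_ker, hK]
    have := LinearMap.congr_fun hcomplex x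
    simpa using this
  -- ker del1 is the orthogonal complement of R
  have hkerdel : LinearMap.ker del1 = B1.orthogonal R := by
    ext y
    simp only [LinearMap.mem_ker, LinearMap.BilinForm.mem_orthogonal_iff]
    constructor
    · rintro h _ ⟨x, rfl⟩
      show B1 (d0 x) y = 0
      rw [hadj, h, map_zero]
    · intro h
      apply hB0nd.1
      intro x
      have := h (d0 x) ⟨x, rfl⟩
      have h2 : B1 (d0 x) y = 0 := this
      rw [hadj] at h2
      have := hB0symm.eq x (del1 y)
      rw [← this, h2]
  -- notation for dimensions
  set n := Module.finrank F C1 with hn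
  set k := Module.finrank F (K : Submodule F C1) with hkdef
  set r := Module.finrank F (R : Submodule F C1) with hrdef
  set ω := Module.finrank F (K ⊓ LinearMap.ker del1 : Submodule F C1) with hω
  set δ := Module.finrank F (LinearMap.ker (del1 ∘ₗ d0)) with hδ
  set q := Module.finrank F (K ⧸ R.comap K.subtype) with hq
  -- quotient dimension
  have hq1 : q + r = k := by
    have h1 := Submodule.finrank_quotient_add_finrank (R.comap K.subtype)
    have h2 : Module.finrank F (R.comap K.subtype) = r :=
      (Submodule.comapSubtypeEquivOfLe hRK).finrank_eq
    rw [h2] at h1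
    exact h1
  -- dimension of ker del1 = n - r
  have hrn : r ≤ n := Submodule.finrank_le R
  have hkd : Module.finrank F (LinearMap.ker del1) = n - r := by
    rw [hkerdel]
    exact LinearMap.BilinForm.finrank_orthogonal hB1nd R
  -- sup/inf dimension formula
  set s := Module.finrank F (K ⊔ LinearMap.ker del1 : Submodule F C1) with hs
  have hsupinf : s + ω = k + (n - r) := by
    have := Submodule.finrank_sup_add_finrank_inf_eq K (LinearMap.ker del1)
    rw [hkd] at this
    exact this
  have hsn : s ≤ n := Submodule.finrank_le _
  -- the orthogonal of the sup is small
  have horthle : B1.orthogonal (K ⊔ LinearMap.ker del1) ≤ R ⊓ LinearMap.ker del1 := by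
    intro x hx
    constructor
    · have h1 : B1.orthogonal (K ⊔ LinearMap.ker del1) ≤ B1.orthogonal (LinearMap.ker del1) :=
        LinearMap.BilinForm.orthogonal_le le_sup_right
      have h2 : B1.orthogonal (LinearMap.ker del1) = R := by
        rw [hkerdel, LinearMap.BilinForm.orthogonal_orthogonal hB1nd hrefl1]
      exact h2 ▸ h1 hx
    · have h1 : B1.orthogonal (K ⊔ LinearMap.ker del1) ≤ B1.orthogonal K :=
        LinearMap.BilinForm.orthogonal_le le_sup_left
      have h2 : B1.orthogonal K ≤ B1.orthogonal R := LinearMap.BilinForm.orthogonal_le hRK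
      rw [hkerdel]
      exact h2 (h1 hx)
  -- R ⊓ ker del1 is the image of Δ⁰ under d0
  have hmap : Submodule.map d0 (LinearMap.ker (del1 ∘ₗ d0)) = R ⊓ LinearMap.ker del1 := by
    have : LinearMap.ker (del1 ∘ₗ d0) = Submodule.comap d0 (LinearMap.ker del1) := by
      ext x; simp [LinearMap.mem_ker]
    rw [this, Submodule.map_comap_eq]
  have hRinf : Module.finrank F (R ⊓ LinearMap.ker del1 : Submodule F C1) ≤ δ := by
    rw [← hmap]
    exact (Submodule.finrank_map_le d0 _)
  have horthdim : Module.finrank F (B1.orthogonal (K ⊔ LinearMap.ker del1)) = n - s :=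
    LinearMap.BilinForm.finrank_orthogonal hB1nd _
  have hfinal : n - s ≤ δ := by
    rw [← horthdim]
    exact le_trans (Submodule.finrank_mono horthle) hRinf
  rw [abs_le]
  constructor <;> [skip; skip] <;> omega
end

section
/- Let p be a prime and let k, d be natural numbers with d ≤ p^k. Let f ∈ ℚ_p[X] be a polynomial of degree at most d such that f(z) ∈ ℤ_p for every z ∈ ℤ_p. Then for all x, y ∈ ℤ_p with x − y ∈ p^{k+1}ℤ_p, one has f(x) − f(y) ∈ pℤ_p. -/
open Finset Polynomial


lemma stmt9_aux_dvd' (p : ℕ) (hp : p.Prime) (k j N : ℕ) (hNd : p ^ (k + 1) ∣ N)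
    (hj0 : 0 < j) (hj : j ≤ p ^ k) : p ∣ N.choose j := by
  rcases Nat.lt_or_ge N j with h | h
  · rw [Nat.choose_eq_zero_of_lt h]; exact dvd_zero p
  have hC0 : N.choose j ≠ 0 := (Nat.choose_pos h).ne'
  obtain ⟨n, rfl⟩ : ∃ n, N = n + 1 := ⟨N - 1, by omega⟩
  obtain ⟨j', rfl⟩ : ∃ j', j = j' + 1 := ⟨j - 1, by omega⟩
  have key : (n + 1) * n.choose j' = (n + 1).choose (j' + 1) * (j' + 1) :=
    Nat.add_one_mul_choose_eq n j'
  have hdvd : p ^ (k + 1) ∣ (n + 1).choose (j' + 1) * (j' + 1) := by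
    rw [← key]
    exact dvd_mul_of_dvd_left hNd _
  have h1 : k + 1 ≤ ((n + 1).choose (j' + 1) * (j' + 1)).factorization p :=
    (Nat.Prime.pow_dvd_iff_le_factorization hp (by positivity)).mp hdvd
  rw [Nat.factorization_mul hC0 (by omega), Finsupp.add_apply] at h1
  have h2 : (j' + 1).factorization p ≤ k := by
    by_contra hcon
    have : p ^ (k + 1) ∣ j' + 1 :=
      (Nat.Prime.pow_dvd_iff_le_factorization hp (by omega)).mpr (by omega)
    have := Nat.le_of_dvd (by omega) this
    have : p ^ k < p ^ (k + 1) := Nat.pow_lt_pow_succ hp.one_lt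
    omega
  have h3 : 1 ≤ ((n + 1).choose (j' + 1)).factorization p := by omega
  have := (Nat.Prime.pow_dvd_iff_le_factorization hp hC0).mpr h3
  simpa using this

-- E: congruence of binomials
lemma stmt9_aux_cong (p : ℕ) (hp : p.Prime) (k m b i : ℕ) (hi : i ≤ p ^ k) :
    ∃ s : ℕ, (b + p ^ (k + 1) * m).choose i = b.choose i + p * s := by
  set N := p ^ (k + 1) * m with hN
  have hvdm : (N + b).choose i = ∑ ij ∈ Finset.HasAntidiagonal.antidiagonal i, N.choose ij.1 * b.choose ij.2 :=
    Nat.add_choose_eq N b i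
  have hmem : ((0 : ℕ), i) ∈ Finset.HasAntidiagonal.antidiagonal i := by simp
  have hsplit : (N + b).choose i
      = b.choose i + ∑ ij ∈ (Finset.HasAntidiagonal.antidiagonal i).erase (0, i),
          N.choose ij.1 * b.choose ij.2 := by
    rw [hvdm, ← Finset.add_sum_erase _ _ hmem]
    simp
  have hdvd : p ∣ ∑ ij ∈ (Finset.HasAntidiagonal.antidiagonal i).erase (0, i),
      N.choose ij.1 * b.choose ij.2 := by
    refine Finset.dvd_sum fun ij hij => ?_
    have h1 := Finset.mem_of_mem_erase hij
    have h2 := Finset.ne_of_mem_erase hij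
    rw [Finset.HasAntidiagonal.mem_antidiagonal] at h1
    have hij1 : 0 < ij.1 := by
      rcases Nat.eq_zero_or_pos ij.1 with h | h
      · exfalso; apply h2; ext <;> simp [h] at h1 ⊢ <;> omega
      · exact h
    exact dvd_mul_of_dvd_left
      (stmt9_aux_dvd' p hp k ij.1 N (dvd_mul_right _ m) hij1 (le_trans (by omega) hi)) _
  obtain ⟨s, hs⟩ := hdvd
  exact ⟨s, by rw [Nat.add_comm b N, hsplit, hs]⟩

variable {p : ℕ} [Fact p.Prime]

lemma stmt9_fwdDiff_eval (f : Polynomial ℚ_[p]) :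
    fwdDiff 1 (fun n : ℕ => f.eval (n : ℚ_[p])) =
      fun n : ℕ => (f.comp (X + C 1) - f).eval (n : ℚ_[p]) := by
  funext n
  simp [fwdDiff, eval_comp]

lemma stmt9_natDegree_step (f : Polynomial ℚ_[p]) (d : ℕ) (hf : f.natDegree ≤ d + 1) :
    (f.comp (X + C 1) - f).natDegree ≤ d := by
  rcases Nat.eq_zero_or_pos f.natDegree with h0 | hpos
  · obtain ⟨a, rfl⟩ := Polynomial.natDegree_eq_zero.mp h0
    simp
  · by_cases hz : f.comp (X + C 1) - f = 0
    · rw [hz]; simp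
    have hq1 : (X + C (1:ℚ_[p])).natDegree = 1 := by
      simpa using Polynomial.natDegree_X_add_C (1:ℚ_[p])
    have hlc : (f.comp (X + C 1)).leadingCoeff = f.leadingCoeff := by
      rw [Polynomial.leadingCoeff_comp (by rw [hq1]; omega)]
      have h1 : (X + C (1:ℚ_[p])).leadingCoeff = 1 :=
        (Polynomial.monic_X_add_C (1:ℚ_[p])).leadingCoeff
      rw [h1, one_pow, mul_one]
    have hfz : f ≠ 0 := fun h => by simp [h] at hpos
    have hcz : f.comp (X + C 1) ≠ 0 := by
      intro h
      apply hfz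
      rw [← Polynomial.leadingCoeff_eq_zero, ← hlc, h, leadingCoeff_zero]
    have hdeg : (f.comp (X + C 1)).degree = f.degree := by
      rw [Polynomial.degree_eq_natDegree hcz, Polynomial.degree_eq_natDegree hfz,
        Polynomial.natDegree_comp, hq1, mul_one]
    have hlt := Polynomial.degree_sub_lt hdeg hcz hlc
    rw [hdeg] at hlt
    have h2 : (f.comp (X + C 1) - f).natDegree < f.natDegree :=
      Polynomial.natDegree_lt_natDegree hz hlt
    omega

lemma stmt9_fwdDiff_zero (d : ℕ) : ∀ (f : Polynomial ℚ_[p]), f.natDegree ≤ d →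
    ∀ n : ℕ, (fwdDiff 1)^[d + 1] (fun n : ℕ => f.eval (n : ℚ_[p])) n = 0 := by
  induction d with
  | zero =>
    intro f hf n
    obtain ⟨a, rfl⟩ := Polynomial.natDegree_eq_zero.mp (Nat.le_zero.mp hf)
    simp [fwdDiff]
  | succ d ih =>
    intro f hf n
    rw [Function.iterate_succ_apply, stmt9_fwdDiff_eval]
    exact ih _ (stmt9_natDegree_step f d hf) n

/-- the consequence of Lucas' theorem used in Section 3.3 of the
paper. If `f ∈ ℚ_p[X]` has degree at most `d ≤ p^k` and takes `ℤ_p` into `ℤ_p`, then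
`f(x) ≡ f(y) (mod p)` whenever `x ≡ y (mod p^{k+1})`. -/
theorem stmt9 (p : ℕ) [Fact p.Prime] (k d : ℕ) (hd : d ≤ p ^ k)
    (f : Polynomial ℚ_[p]) (hdeg : f.natDegree ≤ d)
    (hint : ∀ z : ℤ_[p], ∃ w : ℤ_[p], f.eval (z : ℚ_[p]) = (w : ℚ_[p])) :
    ∀ x y : ℤ_[p], (∃ c : ℤ_[p], x - y = (p : ℤ_[p]) ^ (k + 1) * c) →
      ∃ w : ℤ_[p], f.eval (x : ℚ_[p]) - f.eval (y : ℚ_[p]) = (p : ℚ_[p]) * (w : ℚ_[p]) := by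
  have hp : p.Prime := Fact.out
  set g : ℕ → ℚ_[p] := fun n => f.eval (n : ℚ_[p]) with hg
  set c : ℕ → ℚ_[p] := fun i => (fwdDiff 1)^[i] g 0 with hc
  have hgnorm : ∀ n : ℕ, ‖g n‖ ≤ 1 := by
    intro n
    obtain ⟨w, hw⟩ := hint (n : ℤ_[p])
    have hcast : ((n : ℤ_[p]) : ℚ_[p]) = (n : ℚ_[p]) := by push_cast; rfl
    rw [hg]; simp only [← hcast, hw]
    exact w.property
  have hcnorm : ∀ i : ℕ, ‖c i‖ ≤ 1 := by
    intro i
    rw [hc]; simp only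
    rw [fwdDiff_iter_eq_sum_shift]
    apply IsUltrametricDist.norm_sum_le_of_forall_le_of_nonneg zero_le_one
    intro j hj
    rw [zsmul_eq_mul, norm_mul]
    have h1 : ‖(((-1 : ℤ) ^ (i - j) * i.choose j : ℤ) : ℚ_[p])‖ ≤ 1 :=
      Padic.norm_int_le_one _
    have h2 : ‖g (0 + j • 1)‖ ≤ 1 := by
      simpa using hgnorm j
    exact mul_le_one₀ h1 (norm_nonneg _) h2
  have hczero : ∀ i : ℕ, d < i → c i = 0 := by
    intro i hi
    obtain ⟨e, rfl⟩ : ∃ e, i = e + (d + 1) := ⟨i - (d + 1), by omega⟩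
    have hzero : (fwdDiff (1:ℕ))^[d + 1] g = fun _ => (0 : ℚ_[p]) :=
      funext (stmt9_fwdDiff_zero d f hdeg)
    have hiter : ∀ e : ℕ, (fwdDiff (1:ℕ))^[e] (fun _ : ℕ => (0:ℚ_[p])) = fun _ => 0 := by
      intro e
      induction e with
      | zero => rfl
      | succ e ih => rw [Function.iterate_succ_apply, fwdDiff_const, ih]
    rw [hc]
    show (fwdDiff (1:ℕ))^[e + (d + 1)] g 0 = 0
    rw [Function.iterate_add_apply, hzero, hiter]
  have hnewton : ∀ n : ℕ, g n = ∑ i ∈ range (d + 1), (n.choose i : ℚ_[p]) * c i := by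
    intro n
    have h0 := shift_eq_sum_fwdDiff_iter (1 : ℕ) g n 0
    simp only [smul_eq_mul, mul_one, zero_add] at h0
    set F : ℕ → ℚ_[p] := fun i => n.choose i • c i with hF
    have e1 : ∑ i ∈ range (n + 1), F i = ∑ i ∈ range (max n d + 1), F i := by
      apply Finset.sum_subset (Finset.range_subset_range.mpr (by omega))
      intro i _ hi
      rw [Finset.mem_range] at hi; push_neg at hi
      have : n.choose i = 0 := Nat.choose_eq_zero_of_lt (by omega)
      simp [hF, this]
    have e2 : ∑ i ∈ range (d + 1), F i = ∑ i ∈ range (max n d + 1), F i := by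
      apply Finset.sum_subset (Finset.range_subset_range.mpr (by omega))
      intro i _ hi
      rw [Finset.mem_range] at hi; push_neg at hi
      simp [hF, hczero i (by omega)]
    have : g n = ∑ i ∈ range (d + 1), F i := by
      rw [h0, e1, ← e2]
    rw [this]
    refine Finset.sum_congr rfl fun i _ => ?_
    simp [hF, nsmul_eq_mul]
  have hnat : ∀ b m : ℕ, ‖g (b + p ^ (k + 1) * m) - g b‖ ≤ (p : ℝ)⁻¹ := by
    intro b m
    rw [hnewton (b + p ^ (k + 1) * m), hnewton b, ← Finset.sum_sub_distrib]
    apply IsUltrametricDist.norm_sum_le_of_forall_le_of_nonneg (by positivity)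
    intro i hi
    rw [Finset.mem_range] at hi
    obtain ⟨s, hs⟩ := stmt9_aux_cong p hp k m b i (by omega)
    rw [← sub_mul]
    have hAB : (((b + p ^ (k + 1) * m).choose i : ℚ_[p]) - (b.choose i : ℚ_[p]))
        = (p : ℚ_[p]) * (s : ℚ_[p]) := by
      rw [hs]; push_cast; ring
    rw [hAB, mul_assoc, norm_mul, Padic.norm_p]
    have h1 : ‖(s : ℚ_[p]) * c i‖ ≤ 1 := by
      rw [norm_mul]
      have : ‖(s : ℚ_[p])‖ ≤ 1 := by
        have := Padic.norm_int_le_one (p := p) (s : ℤ)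
        push_cast at this
        exact this
      exact mul_le_one₀ this (norm_nonneg _) (hcnorm i)
    calc (p : ℝ)⁻¹ * ‖(s : ℚ_[p]) * c i‖ ≤ (p : ℝ)⁻¹ * 1 := by
          apply mul_le_mul_of_nonneg_left h1 (by positivity)
      _ = (p : ℝ)⁻¹ := mul_one _
  -- density step
  have hball : ∀ z : ℤ_[p] × ℤ_[p],
      ‖f.eval (((z.1 + (p : ℤ_[p]) ^ (k + 1) * z.2 : ℤ_[p]) : ℚ_[p]))
        - f.eval ((z.1 : ℚ_[p]))‖ ≤ (p : ℝ)⁻¹ := by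
    have ccoe : Continuous ((↑) : ℤ_[p] → ℚ_[p]) := continuous_subtype_val
    have cin : Continuous (fun z : ℤ_[p] × ℤ_[p] => z.1 + (p : ℤ_[p]) ^ (k + 1) * z.2) :=
      continuous_fst.add (continuous_const.mul continuous_snd)
    have c1 : Continuous (fun z : ℤ_[p] × ℤ_[p] =>
        ((z.1 + (p : ℤ_[p]) ^ (k + 1) * z.2 : ℤ_[p]) : ℚ_[p])) := ccoe.comp cin
    have c2 : Continuous (fun z : ℤ_[p] × ℤ_[p] => ((z.1 : ℚ_[p]))) :=
      ccoe.comp continuous_fst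
    have hcont : Continuous (fun z : ℤ_[p] × ℤ_[p] =>
        ‖f.eval (((z.1 + (p : ℤ_[p]) ^ (k + 1) * z.2 : ℤ_[p]) : ℚ_[p]))
          - f.eval ((z.1 : ℚ_[p]))‖) :=
      ((f.continuous.comp c1).sub (f.continuous.comp c2)).norm
    have hclosed : IsClosed {z : ℤ_[p] × ℤ_[p] |
        ‖f.eval (((z.1 + (p : ℤ_[p]) ^ (k + 1) * z.2 : ℤ_[p]) : ℚ_[p]))
          - f.eval ((z.1 : ℚ_[p]))‖ ≤ (p : ℝ)⁻¹} :=
      isClosed_le hcont continuous_const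
    have hdense : DenseRange (Prod.map (Nat.cast : ℕ → ℤ_[p]) (Nat.cast : ℕ → ℤ_[p])) :=
      PadicInt.denseRange_natCast.prodMap PadicInt.denseRange_natCast
    have hsub : Set.range (Prod.map (Nat.cast : ℕ → ℤ_[p]) (Nat.cast : ℕ → ℤ_[p]))
        ⊆ {z : ℤ_[p] × ℤ_[p] |
        ‖f.eval (((z.1 + (p : ℤ_[p]) ^ (k + 1) * z.2 : ℤ_[p]) : ℚ_[p]))
          - f.eval ((z.1 : ℚ_[p]))‖ ≤ (p : ℝ)⁻¹} := by
      rintro _ ⟨⟨b, m⟩, rfl⟩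
      simp only [Prod.map, Set.mem_setOf_eq]
      have hcast1 : ((((b : ℤ_[p]) + (p : ℤ_[p]) ^ (k + 1) * (m : ℤ_[p])) : ℤ_[p]) : ℚ_[p])
          = ((b + p ^ (k + 1) * m : ℕ) : ℚ_[p]) := by push_cast; ring
      have hcast2 : (((b : ℤ_[p])) : ℚ_[p]) = (b : ℚ_[p]) := by push_cast; rfl
      rw [hcast1, hcast2]
      exact hnat b m
    intro z
    have hmem : z ∈ closure (Set.range (Prod.map (Nat.cast : ℕ → ℤ_[p])
        (Nat.cast : ℕ → ℤ_[p]))) := by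
      rw [hdense.closure_range]; trivial
    exact closure_minimal hsub hclosed hmem
  intro x y hxy
  obtain ⟨c0, hc0⟩ := hxy
  have hx : x = y + (p : ℤ_[p]) ^ (k + 1) * c0 := by rw [← hc0]; ring
  have hb := hball (y, c0)
  simp only at hb
  rw [← hx] at hb
  have hpne : ((p : ℚ_[p])) ≠ 0 := Nat.cast_ne_zero.mpr hp.pos.ne'
  have hnormp : (0:ℝ) < ‖(p : ℚ_[p])‖ := norm_pos_iff.mpr hpne
  refine ⟨⟨(f.eval (x : ℚ_[p]) - f.eval (y : ℚ_[p])) / (p : ℚ_[p]), ?_⟩, ?_⟩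
  · rw [norm_div, div_le_one hnormp, Padic.norm_p]
    exact hb
  · show _ = (p : ℚ_[p]) * ((f.eval (x : ℚ_[p]) - f.eval (y : ℚ_[p])) / (p : ℚ_[p]))
    field_simp
end
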